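/- Let S be a finite set, let ≈ be an equivalence relation on S, and for each s ∈ S let [l(s), u(s)] ⊆ [0,1] be a closed interval such that the set {μ ∈ Disc(S) : μ(s) ∈ [l(s), u(s)] for all s} is nonempty. Then for every probability distribution ν on the set S/≈ of equivalence classes, the following are equivalent: (i) ν(C) ∈ [Σ_{s∈C} l(s), Σ_{s∈C} u(s)] for every class C ∈ S/≈; (ii) there exists μ ∈ Disc(S) with μ(s) ∈ [l(s), u(s)] for all s ∈ S and Σ_{s∈C} μ(s) = ν(C) for every class C ∈ S/≈. -/

import Mathlib

open scoped Classical

def IsDist {X : Type} [Fintype X] (μ : X → ℝ) : Prop :=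
  (∀ x, 0 ≤ μ x) ∧ (∑ x, μ x) = 1

noncomputable def classMass {S : Type} [Fintype S] (R : S → S → Prop)
    (μ : S → ℝ) (c : S) : ℝ :=
  ∑ s', if R c s' then μ s' else 0

def ClassDist {S : Type} [Fintype S] (R : S → S → Prop) (ν : S → ℝ) : Prop :=
  (∀ s, 0 ≤ ν s) ∧ (∀ s t : S, R s t → ν s = ν t) ∧
  (∑ s, ν s / ((Finset.univ.filter fun x => R s x).card : ℝ)) = 1

section Aux

variable {S : Type} [Fintype S] {R : S → S → Prop}

lemma classMass_mono (R : S → S → Prop) {f g : S → ℝ} (h : ∀ s, f s ≤ g s) (c : S) :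
    classMass R f c ≤ classMass R g c :=
  Finset.sum_le_sum fun s _ => by by_cases hs : R c s <;> simp [hs, h s]

lemma rel_iff_of_rel (hR : Equivalence R) {c c' : S} (h : R c c') (s : S) :
    R c s ↔ R c' s :=
  ⟨fun h1 => hR.trans (hR.symm h) h1, fun h1 => hR.trans h h1⟩

lemma filter_congr_of_rel (hR : Equivalence R) {c c' : S} (h : R c c') :
    (Finset.univ.filter fun x => R c x) = (Finset.univ.filter fun x => R c' x) := by
  ext x
  simp only [Finset.mem_filter, Finset.mem_univ, true_and]
  exact rel_iff_of_rel hR h x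

lemma classMass_congr (hR : Equivalence R) (f : S → ℝ) {c c' : S} (h : R c c') :
    classMass R f c = classMass R f c' := by
  unfold classMass
  exact Finset.sum_congr rfl fun s _ => if_congr (rel_iff_of_rel hR h s) rfl rfl

lemma card_pos_real (hR : Equivalence R) (t : S) :
    (0 : ℝ) < ((Finset.univ.filter fun x => R t x).card : ℝ) := by
  have ht : t ∈ Finset.univ.filter fun x => R t x := by simp [hR.refl t]
  exact_mod_cast Finset.card_pos.mpr ⟨t, ht⟩

lemma sum_classMass_div (hR : Equivalence R) (f : S → ℝ) :
    (∑ s, classMass R f s / ((Finset.univ.filter fun x => R s x).card : ℝ)) = ∑ s, f s := by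
  set n : S → ℝ := fun s => ((Finset.univ.filter fun x => R s x).card : ℝ) with hn
  calc (∑ s, classMass R f s / n s)
      = ∑ s, ∑ t, (if R s t then f t else 0) / n s := by
        simp [classMass, Finset.sum_div]
    _ = ∑ t, ∑ s, (if R s t then f t else 0) / n s := Finset.sum_comm
    _ = ∑ t, f t := by
        refine Finset.sum_congr rfl fun t _ => ?_
        have h1 : ∀ s, (if R s t then f t else 0) / n s = if R s t then f t / n t else 0 := by
          intro s
          by_cases h : R s t
          · have : n s = n t := by rw [hn]; simp only; rw [filter_congr_of_rel hR h]
            simp [h, this]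
          · simp [h]
        simp only [h1]
        rw [← Finset.sum_filter]
        have h2 : (Finset.univ.filter fun s => R s t) = Finset.univ.filter fun s => R t s := by
          ext x
          simp only [Finset.mem_filter, Finset.mem_univ, true_and]
          exact ⟨fun h => hR.symm h, fun h => hR.symm h⟩
        rw [h2, Finset.sum_const, nsmul_eq_mul]
        have := card_pos_real hR t
        field_simp
        exact mul_div_cancel_left₀ _ this.ne'

end Aux

theorem stmt11 {S : Type} [Fintype S] (R : S → S → Prop) (hR : Equivalence R)
    (l u : S → ℝ) (hl : ∀ s, 0 ≤ l s) (hlu : ∀ s, l s ≤ u s) (hu : ∀ s, u s ≤ 1)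
    (hne : ∃ μ : S → ℝ, IsDist μ ∧ ∀ s, μ s ∈ Set.Icc (l s) (u s))
    (ν : S → ℝ) (hν : ClassDist R ν) :
    (∀ c : S, ν c ∈ Set.Icc (classMass R l c) (classMass R u c)) ↔
      ∃ μ : S → ℝ, IsDist μ ∧ (∀ s, μ s ∈ Set.Icc (l s) (u s)) ∧
        ∀ c : S, classMass R μ c = ν c := by
  constructor
  · intro h
    set L : S → ℝ := fun s => classMass R l s with hL
    set U : S → ℝ := fun s => classMass R u s with hU
    have hLU : ∀ s, L s ≤ U s := fun s => classMass_mono R hlu s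
    have hνL : ∀ s, L s ≤ ν s := fun s => (h s).1
    have hνU : ∀ s, ν s ≤ U s := fun s => (h s).2
    set θ : S → ℝ := fun s => if U s = L s then 0 else (ν s - L s) / (U s - L s) with hθ
    have hθ0 : ∀ s, 0 ≤ θ s := by
      intro s
      rw [hθ]; simp only
      split
      · exact le_refl 0
      · rename_i hne'
        have hlt : L s < U s := lt_of_le_of_ne (hLU s) (Ne.symm hne')
        exact div_nonneg (by linarith [hνL s]) (by linarith)
    have hθ1 : ∀ s, θ s ≤ 1 := by
      intro s
      rw [hθ]; simp only
      split
      · exact zero_le_one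
      · rename_i hne'
        have hlt : L s < U s := lt_of_le_of_ne (hLU s) (Ne.symm hne')
        rw [div_le_one (by linarith)]
        linarith [hνU s]
    set μ : S → ℝ := fun s => l s + θ s * (u s - l s) with hμ
    have hμl : ∀ s, l s ≤ μ s := by
      intro s
      have := mul_nonneg (hθ0 s) (sub_nonneg.mpr (hlu s))
      rw [hμ]; simp only; linarith
    have hμu : ∀ s, μ s ≤ u s := by
      intro s
      have h1 := hθ1 s
      have h2 : θ s * (u s - l s) ≤ 1 * (u s - l s) :=
        mul_le_mul_of_nonneg_right h1 (sub_nonneg.mpr (hlu s))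
      rw [hμ]; simp only; linarith
    -- θ, ν, L, U are constant on classes
    have hθconst : ∀ c s, R c s → θ s = θ c := by
      intro c s hcs
      have hν' : ν s = ν c := (hν.2.1 c s hcs).symm
      have hL' : L s = L c := (classMass_congr hR l hcs).symm
      have hU' : U s = U c := (classMass_congr hR u hcs).symm
      rw [hθ]; simp only [hν', hL', hU']
    have hkey : ∀ c, classMass R μ c = ν c := by
      intro c
      have step1 : classMass R μ c
          = ∑ s, ((if R c s then l s else 0)
              + θ c * ((if R c s then u s else 0) - (if R c s then l s else 0))) := by
        unfold classMass
        refine Finset.sum_congr rfl fun s _ => ?_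
        by_cases hcs : R c s
        · simp only [hcs, if_pos, hμ, hθconst c s hcs]
        · simp [hcs]
      rw [step1, Finset.sum_add_distrib, ← Finset.mul_sum, Finset.sum_sub_distrib]
      have hLc : (∑ s, if R c s then l s else 0) = L c := rfl
      have hUc : (∑ s, if R c s then u s else 0) = U c := rfl
      rw [hLc, hUc]
      rw [hθ]; simp only
      split
      · rename_i he
        have h1 := hνL c
        have h2 := hνU c
        rw [he] at h2
        linarith
      · rename_i hne'
        have hlt : L c < U c := lt_of_le_of_ne (hLU c) (Ne.symm hne')
        have hne2 : U c - L c ≠ 0 := sub_ne_zero.mpr hne'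
        rw [div_mul_cancel₀ _ hne2]
        ring
    refine ⟨μ, ⟨fun s => le_trans (hl s) (hμl s), ?_⟩, fun s => ⟨hμl s, hμu s⟩, hkey⟩
    rw [← sum_classMass_div hR μ]
    have : ∀ s, classMass R μ s = ν s := hkey
    calc (∑ s, classMass R μ s / ((Finset.univ.filter fun x => R s x).card : ℝ))
        = ∑ s, ν s / ((Finset.univ.filter fun x => R s x).card : ℝ) := by
          exact Finset.sum_congr rfl fun s _ => by rw [this s]
      _ = 1 := hν.2.2
  · rintro ⟨μ, ⟨hpos, hsum⟩, hb, hc⟩ c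
    constructor
    · rw [← hc c]; exact classMass_mono R (fun s => (hb s).1) c
    · rw [← hc c]; exact classMass_mono R (fun s => (hb s).2) c
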